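/- Let x_1,…,x_n ∈ ℝ^d be pairwise distinct points and y_1,…,y_n ∈ ℝ^s be pairwise distinct points, and let A, B ∈ ℝ^{n×n} be the Euclidean distance matrices A_{ij} = ‖x_i − x_j‖₂ and B_{ij} = ‖y_i − y_j‖₂. Then the set of global minimizers of E₂(X) = −tr(B Xᵀ A X) over the doubly stochastic matrices DS equals the set of global minimizers of E₂ over the permutation matrices Π_n; in particular min_{X∈DS} E₂(X) = min_{X∈Π_n} E₂(X) and every global minimizer over DS is a permutation matrix. -/

import Mathlib

open Matrix

set_option maxHeartbeats 1000000

section AuxGM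
open MeasureTheory Finset

lemma ite_monotone (b : ℝ) : Monotone (fun t => if b ≤ t then (1:ℝ) else 0) := by
  intro s t hst
  dsimp only
  split_ifs with h1 h2 h2 <;> norm_num
  exact h2 (h1.trans hst)

lemma ite_intervalIntegrable (b r m M : ℝ) :
    IntervalIntegrable (fun t => if b ≤ t then r else 0) volume m M := by
  have h : (fun t => if b ≤ t then r else 0)
      = fun t => r • (if b ≤ t then (1:ℝ) else 0) := by
    ext t; by_cases h : b ≤ t <;> simp [h]
  rw [h]
  exact ((ite_monotone b).intervalIntegrable).smul r

lemma integral_ite_step {m M b : ℝ} (r : ℝ) (hmb : m ≤ b) (hbM : b ≤ M) :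
    ∫ t in m..M, (if b ≤ t then r else 0) = r * (M - b) := by
  have hind : (fun t => if b ≤ t then r else 0)
      = Set.indicator (Set.Ici b) (fun _ => r) := by
    ext t; simp [Set.indicator_apply]
  rw [intervalIntegral.integral_of_le (hmb.trans hbM), hind,
    MeasureTheory.setIntegral_indicator measurableSet_Ici, MeasureTheory.setIntegral_const]
  rcases eq_or_lt_of_le hmb with rfl | hmb'
  · have : Set.Ioc m M ∩ Set.Ici m = Set.Ioc m M := by
      ext t; simp only [Set.mem_inter_iff, Set.mem_Ioc, Set.mem_Ici, and_iff_left_iff_imp]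
      exact fun ht => ht.1.le
    rw [this, Real.volume_real_Ioc, max_eq_left (by linarith)]
    simp [smul_eq_mul]; ring
  · have : Set.Ioc m M ∩ Set.Ici b = Set.Icc b M := by
      ext t; simp only [Set.mem_inter_iff, Set.mem_Ioc, Set.mem_Icc, Set.mem_Ici]
      constructor
      · rintro ⟨⟨_, h2⟩, h3⟩; exact ⟨h3, h2⟩
      · rintro ⟨h1, h2⟩; exact ⟨⟨lt_of_lt_of_le hmb' h1, h2⟩, h1⟩
    rw [this, Real.volume_real_Icc, max_eq_left (by linarith)]
    simp [smul_eq_mul]; ring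

lemma intervalIntegrable_sum' {ι} {m M : ℝ} (s : Finset ι) {f : ι → ℝ → ℝ}
    (h : ∀ i ∈ s, IntervalIntegrable (f i) volume m M) :
    IntervalIntegrable (fun t => ∑ i ∈ s, f i t) volume m M := by
  have h2 := IntervalIntegrable.sum (μ := volume) (a := m) (b := M) s h
  have : (∑ i ∈ s, f i) = fun t => ∑ i ∈ s, f i t := by funext t; simp
  rwa [this] at h2

section oneD
variable {n : ℕ} (a c : Fin n → ℝ)

noncomputable def Srun (t : ℝ) : ℝ := ∑ i, if a i ≤ t then c i else 0

lemma Srun_sq (t : ℝ) :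
    (Srun a c t)^2 = ∑ i, ∑ j, (if max (a i) (a j) ≤ t then c i * c j else 0) := by
  rw [Srun, sq, Finset.sum_mul_sum]
  refine Finset.sum_congr rfl fun i _ => Finset.sum_congr rfl fun j _ => ?_
  by_cases hi : a i ≤ t <;> by_cases hj : a j ≤ t <;> simp [hi, hj, max_le_iff]

variable [Nonempty (Fin n)]

noncomputable def mlo : ℝ := Finset.univ.inf' Finset.univ_nonempty a
noncomputable def Mhi : ℝ := Finset.univ.sup' Finset.univ_nonempty a

lemma mlo_le (i : Fin n) : mlo a ≤ a i := Finset.inf'_le _ (Finset.mem_univ i)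
lemma le_Mhi (i : Fin n) : a i ≤ Mhi a := Finset.le_sup' _ (Finset.mem_univ i)

lemma Srun_sq_intervalIntegrable (m M : ℝ) :
    IntervalIntegrable (fun t => (Srun a c t)^2) volume m M := by
  have : (fun t => (Srun a c t)^2)
      = fun t => ∑ i, ∑ j, (if max (a i) (a j) ≤ t then c i * c j else 0) := by
    funext t; exact Srun_sq a c t
  rw [this]
  exact intervalIntegrable_sum' _ fun i _ =>
    intervalIntegrable_sum' _ fun j _ => ite_intervalIntegrable _ _ _ _

lemma oneD_identity (hc : ∑ i, c i = 0) :
    ∑ i, ∑ j, c i * c j * |a i - a j|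
      = -2 * ∫ t in (mlo a)..(Mhi a), (Srun a c t)^2 := by
  have hswap : (∫ t in (mlo a)..(Mhi a), (Srun a c t)^2)
      = ∑ i, ∑ j, c i * c j * (Mhi a - max (a i) (a j)) := by
    have h0 : (∫ t in (mlo a)..(Mhi a), (Srun a c t)^2)
        = ∫ t in (mlo a)..(Mhi a),
            ∑ i, ∑ j, (if max (a i) (a j) ≤ t then c i * c j else 0) := by
      congr 1; ext t; exact Srun_sq a c t
    have h1 := intervalIntegral.integral_finset_sum (μ := volume) (a := mlo a) (b := Mhi a)
      (s := Finset.univ)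
      (f := fun (i : Fin n) t => ∑ j, if max (a i) (a j) ≤ t then c i * c j else 0)
      (fun i _ => intervalIntegrable_sum' _ (fun j _ => ite_intervalIntegrable _ _ _ _))
    rw [h0, h1]
    refine Finset.sum_congr rfl fun i _ => ?_
    rw [intervalIntegral.integral_finset_sum (fun j _ => ite_intervalIntegrable _ _ _ _)]
    exact Finset.sum_congr rfl fun j _ =>
      integral_ite_step _ (le_trans (mlo_le a i) (le_max_left _ _))
        (max_le (le_Mhi a i) (le_Mhi a j))
  -- linear terms vanish
  have hlin : ∑ i, ∑ j, c i * c j * (a i + a j) = 0 := by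
    have h1 : ∀ i, ∑ j, c i * c j * (a i + a j)
        = c i * a i * (∑ j, c j) + c i * (∑ j, c j * a j) := by
      intro i
      rw [Finset.mul_sum, Finset.mul_sum, ← Finset.sum_add_distrib]
      exact Finset.sum_congr rfl fun j _ => by ring
    rw [Finset.sum_congr rfl fun i _ => h1 i, Finset.sum_add_distrib,
      ← Finset.sum_mul, ← Finset.sum_mul]
    rw [hc]
    simp
  have hMterm : ∑ i, ∑ j, c i * c j * Mhi a = 0 := by
    have h3 : ∀ i, ∑ j, c i * c j * Mhi a = c i * Mhi a * (∑ j, c j) := by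
      intro i
      rw [Finset.mul_sum]
      exact Finset.sum_congr rfl fun j _ => by ring
    rw [Finset.sum_congr rfl fun i _ => h3 i, hc]
    simp
  have habs : ∀ i j, c i * c j * |a i - a j|
      = 2 * (c i * c j * Mhi a) - 2 * (c i * c j * (Mhi a - max (a i) (a j)))
        - c i * c j * (a i + a j) := by
    intro i j
    have : |a i - a j| = 2 * max (a i) (a j) - a i - a j := by
      rcases le_total (a i) (a j) with h | h
      · rw [abs_of_nonpos (by linarith), max_eq_right h]; ring
      · rw [abs_of_nonneg (by linarith), max_eq_left h]; ring
    rw [this]; ring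
  calc ∑ i, ∑ j, c i * c j * |a i - a j|
      = ∑ i, ∑ j, (2 * (c i * c j * Mhi a)
          - 2 * (c i * c j * (Mhi a - max (a i) (a j))) - c i * c j * (a i + a j)) := by
        exact Finset.sum_congr rfl fun i _ => Finset.sum_congr rfl fun j _ => habs i j
    _ = 2 * (∑ i, ∑ j, c i * c j * Mhi a)
          - 2 * (∑ i, ∑ j, c i * c j * (Mhi a - max (a i) (a j)))
          - ∑ i, ∑ j, c i * c j * (a i + a j) := by
        simp [Finset.sum_sub_distrib, Finset.mul_sum]
    _ = -2 * ∫ t in (mlo a)..(Mhi a), (Srun a c t)^2 := by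
        rw [hswap, hMterm, hlin]; ring

lemma oneD_nonpos (hc : ∑ i, c i = 0) :
    ∑ i, ∑ j, c i * c j * |a i - a j| ≤ 0 := by
  rw [oneD_identity a c hc]
  have h : 0 ≤ ∫ t in (mlo a)..(Mhi a), (Srun a c t)^2 :=
    intervalIntegral.integral_nonneg (le_trans (mlo_le a (Classical.arbitrary _))
      (le_Mhi a (Classical.arbitrary _))) (fun t _ => sq_nonneg _)
  linarith

end oneD

lemma oneD_nonpos' {n : ℕ} (a c : Fin n → ℝ) (hc : ∑ i, c i = 0) :
    ∑ i, ∑ j, c i * c j * |a i - a j| ≤ 0 := by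
  rcases isEmpty_or_nonempty (Fin n) with h | h
  · simp
  · exact oneD_nonpos a c hc

lemma oneD_strict {n : ℕ} (a c : Fin n → ℝ) (hinj : Function.Injective a)
    (hc : ∑ i, c i = 0) (hc0 : c ≠ 0) :
    ∑ i, ∑ j, c i * c j * |a i - a j| < 0 := by
  have hne : Nonempty (Fin n) := by
    rcases isEmpty_or_nonempty (Fin n) with h | h
    · exact absurd (funext fun i => isEmptyElim i) hc0
    · exact h
  -- support
  set s : Finset (Fin n) := Finset.univ.filter fun i => c i ≠ 0 with hs
  have hsne : s.Nonempty := by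
    obtain ⟨i, hi⟩ := Function.ne_iff.mp hc0
    refine ⟨i, ?_⟩
    simp only [hs, Finset.mem_filter, Finset.mem_univ, true_and]
    simpa using hi
  obtain ⟨i0, hi0s, hi0min⟩ := s.exists_min_image a hsne
  have hci0 : c i0 ≠ 0 := by simpa [hs] using hi0s
  -- the next larger value
  set t : Finset (Fin n) := Finset.univ.filter fun i => a i0 < a i with ht
  have htne : t.Nonempty := by
    by_contra hemp
    rw [Finset.not_nonempty_iff_eq_empty] at hemp
    have hall : ∀ i, a i ≤ a i0 := by
      intro i
      by_contra hlt
      have : i ∈ t := by simp [ht, lt_of_not_ge hlt]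
      simp [hemp] at this
    have hsingle : s = {i0} := by
      apply Finset.Subset.antisymm
      · intro i hi
        have h1 : a i0 ≤ a i := hi0min i hi
        have h2 : a i = a i0 := le_antisymm (hall i) h1
        simp [hinj h2]
      · intro i hi
        simp at hi; subst hi; exact hi0s
    have : ∑ i, c i = c i0 := by
      rw [← Finset.sum_filter_ne_zero]
      · rw [show Finset.univ.filter (fun i => c i ≠ 0) = s from rfl, hsingle,
          Finset.sum_singleton]
    rw [this] at hc
    exact hci0 hc
  obtain ⟨ib, hibt, hibmin⟩ := t.exists_min_image a htne
  set b := a ib with hbdef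
  have hab : a i0 < b := by simpa [ht] using hibt
  -- S is constantly c i0 on Ioo (a i0) b
  have hconst : ∀ τ ∈ Set.Ioo (a i0) b, Srun a c τ = c i0 := by
    intro τ hτ
    rw [Srun]
    rw [Finset.sum_eq_single i0]
    · simp [hτ.1.le]
    · intro i _ hne'
      by_cases hile : a i ≤ τ
      · have h1 : ¬ (a i0 < a i) := by
          intro hgt
          have : i ∈ t := by simp [ht, hgt]
          have := hibmin i this
          linarith [hτ.2]
        have h2 : a i ≤ a i0 := le_of_not_gt h1
        have h3 : c i = 0 := by
          by_contra hci
          have his : i ∈ s := by simp [hs, hci]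
          have := hi0min i his
          exact hne' (hinj (le_antisymm h2 this))
        simp [hile, h3]
      · simp [hile]
    · intro h; exact absurd (Finset.mem_univ i0) h
  have hmM : mlo a ≤ Mhi a :=
    le_trans (mlo_le a (Classical.arbitrary _)) (le_Mhi a (Classical.arbitrary _))
  have hIoo_sub : Set.Ioo (a i0) b ⊆ Set.Ioc (mlo a) (Mhi a) := by
    intro τ hτ
    exact ⟨lt_of_le_of_lt (mlo_le a i0) hτ.1, le_trans hτ.2.le (le_Mhi a ib)⟩
  have hInt : IntegrableOn (fun τ => (Srun a c τ)^2) (Set.Ioc (mlo a) (Mhi a)) volume := by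
    have := Srun_sq_intervalIntegrable a c (mlo a) (Mhi a)
    rwa [intervalIntegrable_iff_integrableOn_Ioc_of_le hmM] at this
  have hlow : (b - a i0) * (c i0)^2 ≤ ∫ τ in Set.Ioc (mlo a) (Mhi a), (Srun a c τ)^2 := by
    have h1 : ∫ τ in Set.Ioo (a i0) b, (Srun a c τ)^2
        = ∫ τ in Set.Ioo (a i0) b, (c i0)^2 := by
      apply MeasureTheory.setIntegral_congr_fun measurableSet_Ioo
      intro τ hτ
      simp [hconst τ hτ]
    have h2 : ∫ τ in Set.Ioo (a i0) b, (c i0)^2 = (b - a i0) * (c i0)^2 := by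
      rw [MeasureTheory.setIntegral_const, Real.volume_real_Ioo,
        max_eq_left (by linarith), smul_eq_mul]
    have h3 : ∫ τ in Set.Ioo (a i0) b, (Srun a c τ)^2
        ≤ ∫ τ in Set.Ioc (mlo a) (Mhi a), (Srun a c τ)^2 := by
      apply MeasureTheory.setIntegral_mono_set hInt
      · exact Filter.Eventually.of_forall fun τ => sq_nonneg _
      · exact Filter.Eventually.of_forall hIoo_sub
    linarith [h1, h2, h3]
  have hpos : 0 < (b - a i0) * (c i0)^2 :=
    mul_pos (by linarith) (by positivity)
  rw [oneD_identity a c hc, intervalIntegral.integral_of_le hmM]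
  nlinarith [hlow, hpos]

noncomputable def nuB (d : ℕ) : Measure (EuclideanSpace ℝ (Fin d)) :=
  volume.restrict (Metric.ball 0 1)

lemma integrable_inner_nuB (u : EuclideanSpace ℝ (Fin d)) :
    Integrable (fun w => |(inner ℝ w u : ℝ)|) (nuB d) := by
  have hcont : Continuous fun w : EuclideanSpace ℝ (Fin d) => |(inner ℝ w u : ℝ)| :=
    (continuous_id.inner continuous_const).abs
  have h1 : IntegrableOn (fun w : EuclideanSpace ℝ (Fin d) => |(inner ℝ w u : ℝ)|)
      (Metric.closedBall 0 1) volume :=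
    hcont.continuousOn.integrableOn_compact (isCompact_closedBall 0 1)
  exact h1.mono_set Metric.ball_subset_closedBall

lemma nuB_comp_isometry (e : EuclideanSpace ℝ (Fin d) ≃ₗᵢ[ℝ] EuclideanSpace ℝ (Fin d))
    (g : EuclideanSpace ℝ (Fin d) → ℝ) :
    ∫ w, g (e w) ∂(nuB d) = ∫ w, g w ∂(nuB d) := by
  have hmp : MeasurePreserving e volume volume := e.measurePreserving
  have hball : e ⁻¹' (Metric.ball 0 1) = Metric.ball 0 1 := by
    ext w
    simp [Metric.mem_ball, dist_eq_norm, e.norm_map]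
  have hmp2 : MeasurePreserving e (nuB d) (nuB d) := by
    have := hmp.restrict_preimage (s := Metric.ball 0 1) measurableSet_ball
    rwa [hball] at this
  exact hmp2.integral_comp e.toHomeomorph.measurableEmbedding g

lemma nuB_repr (hd : 0 < d) (u : EuclideanSpace ℝ (Fin d)) :
    ∫ w, |(inner ℝ w u : ℝ)| ∂(nuB d)
      = (∫ w, |(inner ℝ w (EuclideanSpace.single (⟨0, hd⟩ : Fin d) (1:ℝ)) : ℝ)| ∂(nuB d)) * ‖u‖ := by
  set e1 : EuclideanSpace ℝ (Fin d) := EuclideanSpace.single (⟨0, hd⟩ : Fin d) (1:ℝ) with he1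
  have he1n : ‖e1‖ = 1 := by simp [he1]
  set y : EuclideanSpace ℝ (Fin d) := ‖u‖ • e1 with hy
  have hyn : ‖y‖ = ‖u‖ := by simp [hy, he1n, norm_smul]
  -- reflection takes u to y
  set R := Submodule.reflection (ℝ ∙ (u - y))ᗮ with hR
  have hRu : R u = y := Submodule.reflection_sub hyn.symm
  have step1 : ∫ w, |(inner ℝ w u : ℝ)| ∂(nuB d) = ∫ w, |(inner ℝ w y : ℝ)| ∂(nuB d) := by
    have h1 : ∀ w, |(inner ℝ w u : ℝ)| = |(inner ℝ (R w) y : ℝ)| := by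
      intro w
      rw [← hRu, LinearIsometryEquiv.inner_map_map]
    calc ∫ w, |(inner ℝ w u : ℝ)| ∂(nuB d) = ∫ w, |(inner ℝ (R w) y : ℝ)| ∂(nuB d) := by
          simp_rw [h1]
      _ = ∫ w, |(inner ℝ w y : ℝ)| ∂(nuB d) :=
          nuB_comp_isometry R (fun w => |(inner ℝ w y : ℝ)|)
  rw [step1, hy]
  simp_rw [real_inner_smul_right, abs_mul, abs_norm]
  rw [MeasureTheory.integral_const_mul]
  ring

lemma nuB_ne_zero (hd : 0 < d) : nuB d ≠ 0 := by
  intro h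
  have h1 : nuB d Set.univ = 0 := by rw [h]; simp
  rw [nuB, Measure.restrict_apply_univ] at h1
  exact (Metric.measure_ball_pos volume 0 one_pos).ne' h1

lemma kappa_pos (hd : 0 < d) :
    0 < ∫ w, |(inner ℝ w (EuclideanSpace.single (⟨0, hd⟩ : Fin d) (1:ℝ)) : ℝ)| ∂(nuB d) := by
  set e1 : EuclideanSpace ℝ (Fin d) := EuclideanSpace.single (⟨0, hd⟩ : Fin d) (1:ℝ) with he1
  have he1n : ‖e1‖ = 1 := by simp [he1]
  set ctr : EuclideanSpace ℝ (Fin d) := (2⁻¹ : ℝ) • e1 with hctr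
  set sb : Set (EuclideanSpace ℝ (Fin d)) := Metric.ball ctr 4⁻¹ with hsb
  have hsub : sb ⊆ Metric.ball 0 1 := by
    intro w hw
    rw [Metric.mem_ball, dist_eq_norm] at hw ⊢
    have h1 : ‖ctr‖ = 2⁻¹ := by
      rw [hctr, norm_smul, he1n]; norm_num
    calc ‖w - 0‖ = ‖(w - ctr) + ctr‖ := by rw [sub_zero, sub_add_cancel]
      _ ≤ ‖w - ctr‖ + ‖ctr‖ := norm_add_le _ _
      _ < 4⁻¹ + 2⁻¹ := by rw [h1]; linarith
      _ ≤ 1 := by norm_num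
  have hbound : ∀ w ∈ sb, (4⁻¹ : ℝ) ≤ |(inner ℝ w e1 : ℝ)| := by
    intro w hw
    rw [hsb, Metric.mem_ball, dist_eq_norm] at hw
    have h2 : |(inner ℝ (w - ctr) e1 : ℝ)| ≤ ‖w - ctr‖ * ‖e1‖ := abs_real_inner_le_norm _ _
    rw [he1n, mul_one] at h2
    have h3 : (inner ℝ ctr e1 : ℝ) = 2⁻¹ := by
      rw [hctr, real_inner_smul_left, real_inner_self_eq_norm_sq, he1n]; norm_num
    have h4 : (inner ℝ w e1 : ℝ) = inner ℝ (w - ctr) e1 + (2⁻¹ : ℝ) := by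
      rw [← h3, inner_sub_left]; ring
    rw [h4]
    have := abs_le.mp (le_trans h2 hw.le)
    rw [le_abs]
    left; linarith [this.1]
  have hint : IntegrableOn (fun w : EuclideanSpace ℝ (Fin d) => |(inner ℝ w e1 : ℝ)|)
      (Metric.ball 0 1) volume := integrable_inner_nuB e1
  have hmeas : MeasurableSet sb := measurableSet_ball
  have hsbvol : 0 < (volume sb).toReal := by
    refine ENNReal.toReal_pos (Metric.measure_ball_pos volume ctr (by norm_num)).ne' ?_
    exact (measure_ball_lt_top).ne
  calc (0:ℝ) < (volume sb).toReal * 4⁻¹ := by positivity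
    _ = ∫ w in sb, (4⁻¹ : ℝ) := by rw [MeasureTheory.setIntegral_const, smul_eq_mul]; rfl
    _ ≤ ∫ w in sb, |(inner ℝ w e1 : ℝ)| := by
        apply MeasureTheory.setIntegral_mono_on
        · exact integrableOn_const measure_ball_lt_top.ne
        · exact hint.mono_set hsub
        · exact hmeas
        · exact hbound
    _ ≤ ∫ w in Metric.ball 0 1, |(inner ℝ w e1 : ℝ)| := by
        apply MeasureTheory.setIntegral_mono_set hint
        · exact Filter.Eventually.of_forall fun w => abs_nonneg _
        · exact Filter.Eventually.of_forall hsub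
    _ = ∫ w, |(inner ℝ w e1 : ℝ)| ∂(nuB d) := rfl

lemma hyperplane_null (v : EuclideanSpace ℝ (Fin d)) (hv : v ≠ 0) :
    nuB d {w | (inner ℝ w v : ℝ) = 0} = 0 := by
  set K : Submodule ℝ (EuclideanSpace ℝ (Fin d)) := LinearMap.ker (innerSL ℝ v).toLinearMap
    with hK
  have hKne : K ≠ ⊤ := by
    intro h
    have : (inner ℝ v v : ℝ) = 0 := by
      have hvK : v ∈ K := h ▸ Submodule.mem_top
      simpa [hK, LinearMap.mem_ker] using hvK
    rw [inner_self_eq_zero] at this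
    exact hv this
  have h0 : volume (K : Set (EuclideanSpace ℝ (Fin d))) = 0 :=
    Measure.addHaar_submodule volume K hKne
  have hset : {w : EuclideanSpace ℝ (Fin d) | (inner ℝ w v : ℝ) = 0} = (K : Set _) := by
    ext w
    simp only [Set.mem_setOf_eq, SetLike.mem_coe, hK, LinearMap.mem_ker]
    have : ((innerSL ℝ v).toLinearMap) w = (inner ℝ v w : ℝ) := rfl
    rw [this, real_inner_comm]
  rw [hset]
  exact le_antisymm (le_trans (Measure.restrict_apply_le _ _) h0.le) (by positivity)

theorem strict_cnd {d n : ℕ} (p : Fin n → EuclideanSpace ℝ (Fin d))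
    (hp : Function.Injective p) (c : Fin n → ℝ) (hc : ∑ i, c i = 0) (hc0 : c ≠ 0) :
    ∑ i, ∑ j, c i * c j * ‖p i - p j‖ < 0 := by
  classical
  -- find two distinct indices in the support to conclude d > 0
  obtain ⟨i1, hi1⟩ := Function.ne_iff.mp hc0
  have hi1' : c i1 ≠ 0 := by simpa using hi1
  have hex2 : ∃ i2, i2 ≠ i1 ∧ c i2 ≠ 0 := by
    by_contra h
    push_neg at h
    have : ∑ i, c i = c i1 := by
      rw [Finset.sum_eq_single i1]
      · intro i _ hne
        by_contra hci
        exact hci (h i hne)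
      · intro h'; exact absurd (Finset.mem_univ i1) h'
    rw [this] at hc; exact hi1' hc
  obtain ⟨i2, hi2ne, _⟩ := hex2
  have hpne : p i2 - p i1 ≠ 0 := sub_ne_zero.mpr (fun h => hi2ne (hp h))
  have hd : 0 < d := by
    by_contra h
    push_neg at h
    interval_cases d
    apply hpne
    have : ‖p i2 - p i1‖ = 0 := by
      rw [EuclideanSpace.norm_eq]
      simp
    rwa [norm_eq_zero] at this
  set κ := ∫ w, |(inner ℝ w (EuclideanSpace.single (⟨0, hd⟩ : Fin d) (1:ℝ)) : ℝ)| ∂(nuB d)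
    with hκ
  have hκpos : 0 < κ := kappa_pos hd
  set g : EuclideanSpace ℝ (Fin d) → ℝ :=
    fun w => ∑ i, ∑ j, c i * c j * |(inner ℝ w (p i) : ℝ) - (inner ℝ w (p j) : ℝ)| with hg
  have hgle : ∀ w, g w ≤ 0 := fun w =>
    oneD_nonpos' (fun i => (inner ℝ w (p i) : ℝ)) c hc
  have hgint : Integrable g (nuB d) := by
    rw [hg]
    apply MeasureTheory.integrable_finset_sum
    intro i _
    apply MeasureTheory.integrable_finset_sum
    intro j _
    have : (fun w : EuclideanSpace ℝ (Fin d) =>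
        c i * c j * |(inner ℝ w (p i) : ℝ) - (inner ℝ w (p j) : ℝ)|)
        = fun w => c i * c j * |(inner ℝ w (p i - p j) : ℝ)| := by
      funext w
      rw [inner_sub_right]
    rw [this]
    exact (integrable_inner_nuB (p i - p j)).const_mul _
  have hint_eq : ∫ w, g w ∂(nuB d) = κ * ∑ i, ∑ j, c i * c j * ‖p i - p j‖ := by
    rw [hg, MeasureTheory.integral_finset_sum _ (fun i _ => ?_)]
    swap
    · apply MeasureTheory.integrable_finset_sum
      intro j _
      have : (fun w : EuclideanSpace ℝ (Fin d) =>
          c i * c j * |(inner ℝ w (p i) : ℝ) - (inner ℝ w (p j) : ℝ)|)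
          = fun w => c i * c j * |(inner ℝ w (p i - p j) : ℝ)| := by
        funext w; rw [inner_sub_right]
      rw [this]
      exact (integrable_inner_nuB (p i - p j)).const_mul _
    rw [Finset.mul_sum]
    refine Finset.sum_congr rfl fun i _ => ?_
    rw [MeasureTheory.integral_finset_sum _ (fun j _ => ?_)]
    swap
    · have : (fun w : EuclideanSpace ℝ (Fin d) =>
          c i * c j * |(inner ℝ w (p i) : ℝ) - (inner ℝ w (p j) : ℝ)|)
          = fun w => c i * c j * |(inner ℝ w (p i - p j) : ℝ)| := by
        funext w; rw [inner_sub_right]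
      rw [this]
      exact (integrable_inner_nuB (p i - p j)).const_mul _
    rw [Finset.mul_sum]
    refine Finset.sum_congr rfl fun j _ => ?_
    have h1 : (fun w : EuclideanSpace ℝ (Fin d) =>
        c i * c j * |(inner ℝ w (p i) : ℝ) - (inner ℝ w (p j) : ℝ)|)
        = fun w => c i * c j * |(inner ℝ w (p i - p j) : ℝ)| := by
      funext w; rw [inner_sub_right]
    calc ∫ w, c i * c j * |(inner ℝ w (p i) : ℝ) - (inner ℝ w (p j) : ℝ)| ∂(nuB d)
        = ∫ w, c i * c j * |(inner ℝ w (p i - p j) : ℝ)| ∂(nuB d) := by rw [h1]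
      _ = c i * c j * ∫ w, |(inner ℝ w (p i - p j) : ℝ)| ∂(nuB d) :=
          MeasureTheory.integral_const_mul _ _
      _ = c i * c j * (κ * ‖p i - p j‖) := by rw [nuB_repr hd (p i - p j)]
      _ = κ * (c i * c j * ‖p i - p j‖) := by ring
  -- ∫ g < 0
  have hne : ∫ w, g w ∂(nuB d) ≠ 0 := by
    intro hzero
    have hgz : g =ᵐ[nuB d] 0 := by
      have h2 : ∫ w, (-g) w ∂(nuB d) = 0 := by
        simp only [Pi.neg_apply]
        rw [MeasureTheory.integral_neg, hzero, neg_zero]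
      have h3 : (fun w => (-g) w) =ᵐ[nuB d] 0 :=
        (MeasureTheory.integral_eq_zero_iff_of_nonneg
          (fun w => by simpa using hgle w) hgint.neg).mp h2
      filter_upwards [h3] with w hw
      simpa using hw
    have hdistinct : ∀ᵐ w ∂(nuB d), ∀ i j : Fin n, i ≠ j →
        (inner ℝ w (p i - p j) : ℝ) ≠ 0 := by
      rw [MeasureTheory.ae_all_iff]
      intro i
      rw [MeasureTheory.ae_all_iff]
      intro j
      rcases eq_or_ne i j with rfl | hij
      · filter_upwards with w h; exact absurd rfl h
      · have hnull := hyperplane_null (p i - p j)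
          (sub_ne_zero.mpr (fun h => hij (hp h)))
        rw [MeasureTheory.ae_iff]
        refine measure_mono_null (fun w hw => ?_) hnull
        simp only [Set.mem_setOf_eq] at hw ⊢
        push_neg at hw
        exact hw.2
    have : ∀ᵐ w ∂(nuB d), g w = 0 ∧ ∀ i j : Fin n, i ≠ j →
        (inner ℝ w (p i - p j) : ℝ) ≠ 0 := hgz.and hdistinct
    have hnebot : (MeasureTheory.ae (nuB d)).NeBot :=
      MeasureTheory.ae_neBot.mpr (nuB_ne_zero hd)
    obtain ⟨w, hw1, hw2⟩ := this.exists
    have hinj : Function.Injective (fun i => (inner ℝ w (p i) : ℝ)) := by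
      intro i j hij
      by_contra hne'
      apply hw2 i j hne'
      have hij' : (inner ℝ w (p i) : ℝ) = inner ℝ w (p j) := hij
      rw [inner_sub_right, hij', sub_self]
    have := oneD_strict (fun i => (inner ℝ w (p i) : ℝ)) c hinj hc hc0
    rw [show g w = ∑ i, ∑ j, c i * c j *
      |(inner ℝ w (p i) : ℝ) - (inner ℝ w (p j) : ℝ)| from rfl] at hw1
    exact absurd hw1 (ne_of_lt this)
  have hle : ∫ w, g w ∂(nuB d) ≤ 0 :=
    MeasureTheory.integral_nonpos (fun w => hgle w)
  have hlt : ∫ w, g w ∂(nuB d) < 0 := lt_of_le_of_ne hle hne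
  rw [hint_eq] at hlt
  nlinarith [hκpos, hlt]


section quad

open scoped MatrixOrder

variable {n : ℕ}

-- real symmetric matrix is Hermitian

lemma real_conjTranspose {M : Matrix (Fin n) (Fin n) ℝ} : Mᴴ = Mᵀ := by
  apply Matrix.ext
  intro i j
  rw [Matrix.conjTranspose_apply, Matrix.transpose_apply, star_trivial]

lemma isHermitian_of_symm {M : Matrix (Fin n) (Fin n) ℝ} (h : Mᵀ = M) : M.IsHermitian := by
  show Mᴴ = M
  rw [real_conjTranspose, h]

lemma trace_transpose_mul_self (M : Matrix (Fin n) (Fin n) ℝ) :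
    (Mᵀ * M).trace = ∑ j, ∑ k, (M k j)^2 := by
  rw [Matrix.trace]
  simp [Matrix.diag, Matrix.mul_apply, sq]

lemma quad_lemma (A B : Matrix (Fin n) (Fin n) ℝ) (hAs : Aᵀ = A) (hBs : Bᵀ = B)
    (hAq : ∀ c : Fin n → ℝ, (∑ i, c i = 0) → c ≠ 0 → c ⬝ᵥ (A *ᵥ c) < 0)
    (hBq : ∀ c : Fin n → ℝ, (∑ i, c i = 0) → c ≠ 0 → c ⬝ᵥ (B *ᵥ c) < 0)
    (Z : Matrix (Fin n) (Fin n) ℝ)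
    (hZr : ∀ i, ∑ j, Z i j = 0) (hZc : ∀ j, ∑ i, Z i j = 0) :
    0 ≤ (B * Zᵀ * A * Z).trace ∧ (Z ≠ 0 → 0 < (B * Zᵀ * A * Z).trace) := by
  classical
  rcases Nat.eq_zero_or_pos n with rfl | hn
  · constructor
    · simp [Matrix.trace]
    · intro hZ
      exact absurd (by ext i j; exact i.elim0) hZ
  have hn0 : (n : ℝ) ≠ 0 := Nat.cast_ne_zero.mpr hn.ne'
  have hAq' : ∀ c : Fin n → ℝ, (∑ i, c i = 0) → c ⬝ᵥ (A *ᵥ c) ≤ 0 := by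
    intro c hcs
    rcases eq_or_ne c 0 with rfl | hc
    · simp
    · exact (hAq c hcs hc).le
  have hBq' : ∀ c : Fin n → ℝ, (∑ i, c i = 0) → c ⬝ᵥ (B *ᵥ c) ≤ 0 := by
    intro c hcs
    rcases eq_or_ne c 0 with rfl | hc
    · simp
    · exact (hBq c hcs hc).le
  set J : Matrix (Fin n) (Fin n) ℝ := Matrix.of (fun _ _ => (1:ℝ)) with hJ
  set P : Matrix (Fin n) (Fin n) ℝ := 1 - ((n:ℝ)⁻¹) • J with hP
  have hPt : Pᵀ = P := by
    rw [hP, Matrix.transpose_sub, Matrix.transpose_one, Matrix.transpose_smul]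
    congr 1
  have hPv : ∀ v : Fin n → ℝ, P *ᵥ v = fun i => v i - (n:ℝ)⁻¹ * ∑ j, v j := by
    intro v
    funext i
    rw [hP, Matrix.sub_mulVec, Matrix.smul_mulVec]
    simp only [Matrix.one_mulVec, Pi.sub_apply, Pi.smul_apply, smul_eq_mul]
    congr 1
    rw [Matrix.mulVec, dotProduct]
    simp [hJ]
  have hPfix : ∀ v : Fin n → ℝ, (∑ i, v i = 0) → P *ᵥ v = v := by
    intro v hv
    rw [hPv]
    funext i
    rw [hv]
    simp
  have hPsum : ∀ v : Fin n → ℝ, ∑ i, (P *ᵥ v) i = 0 := by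
    intro v
    rw [hPv]
    simp only
    rw [Finset.sum_sub_distrib]
    rw [Finset.sum_const, Finset.card_univ, Fintype.card_fin]
    simp [nsmul_eq_mul, hn0]
  set G : Matrix (Fin n) (Fin n) ℝ := -(P * A * P) with hG
  set H : Matrix (Fin n) (Fin n) ℝ := -(P * B * P) with hH
  have hquadG : ∀ v : Fin n → ℝ, v ⬝ᵥ (G *ᵥ v) = -((P *ᵥ v) ⬝ᵥ (A *ᵥ (P *ᵥ v))) := by
    intro v
    rw [hG, Matrix.neg_mulVec, dotProduct_neg]
    congr 1
    rw [← Matrix.mulVec_mulVec, ← Matrix.mulVec_mulVec]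
    rw [Matrix.dotProduct_mulVec v P, ← Matrix.mulVec_transpose, hPt]
  have hquadH : ∀ v : Fin n → ℝ, v ⬝ᵥ (H *ᵥ v) = -((P *ᵥ v) ⬝ᵥ (B *ᵥ (P *ᵥ v))) := by
    intro v
    rw [hH, Matrix.neg_mulVec, dotProduct_neg]
    congr 1
    rw [← Matrix.mulVec_mulVec, ← Matrix.mulVec_mulVec]
    rw [Matrix.dotProduct_mulVec v P, ← Matrix.mulVec_transpose, hPt]
  have hGt : Gᵀ = G := by
    rw [hG, Matrix.transpose_neg, Matrix.transpose_mul, Matrix.transpose_mul, hPt, hAs,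
      Matrix.mul_assoc]
  have hHt : Hᵀ = H := by
    rw [hH, Matrix.transpose_neg, Matrix.transpose_mul, Matrix.transpose_mul, hPt, hBs,
      Matrix.mul_assoc]
  have hGpsd : G.PosSemidef := by
    refine posSemidef_iff_dotProduct_mulVec.mpr ⟨isHermitian_of_symm hGt, fun v => ?_⟩
    have h1 : star v = v := by simp
    rw [h1, hquadG]
    have := hAq' (P *ᵥ v) (hPsum v)
    linarith
  have hHpsd : H.PosSemidef := by
    refine posSemidef_iff_dotProduct_mulVec.mpr ⟨isHermitian_of_symm hHt, fun v => ?_⟩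
    have h1 : star v = v := by simp
    rw [h1, hquadH]
    have := hBq' (P *ᵥ v) (hPsum v)
    linarith
  set C := CFC.sqrt G with hC
  set D := CFC.sqrt H with hD
  have hCC : C * C = G := CFC.sqrt_mul_sqrt_self G hGpsd.nonneg
  have hDD : D * D = H := CFC.sqrt_mul_sqrt_self H hHpsd.nonneg
  have hCt : Cᵀ = C := by
    have h2 : Cᴴ = C := (CFC.sqrt_nonneg G).posSemidef.1
    rwa [real_conjTranspose] at h2
  have hDt : Dᵀ = D := by
    have h2 : Dᴴ = D := (CFC.sqrt_nonneg H).posSemidef.1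
    rwa [real_conjTranspose] at h2
  have hJZ : J * Z = 0 := by
    ext i j
    simp only [Matrix.mul_apply, hJ, Matrix.zero_apply, Matrix.of_apply, one_mul]
    exact hZc j
  have hZJ : Z * J = 0 := by
    ext i j
    simp only [Matrix.mul_apply, hJ, Matrix.zero_apply, Matrix.of_apply, mul_one]
    exact hZr i
  have hPZ : P * Z = Z := by
    rw [hP, Matrix.sub_mul, Matrix.one_mul, Matrix.smul_mul, hJZ, smul_zero, sub_zero]
  have hZP : Z * P = Z := by
    rw [hP, Matrix.mul_sub, Matrix.mul_one, Matrix.mul_smul, hZJ, smul_zero, sub_zero]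
  have hPZt : P * Zᵀ = Zᵀ := by
    calc P * Zᵀ = Pᵀ * Zᵀ := by rw [hPt]
      _ = (Z * P)ᵀ := by rw [Matrix.transpose_mul]
      _ = Zᵀ := by rw [hZP]
  have hZtP : Zᵀ * P = Zᵀ := by
    calc Zᵀ * P = Zᵀ * Pᵀ := by rw [hPt]
      _ = (P * Z)ᵀ := by rw [Matrix.transpose_mul]
      _ = Zᵀ := by rw [hPZ]
  -- trace identity: tr(B Zᵀ A Z) = tr(H Zᵀ G Z)
  have htr1 : (B * Zᵀ * A * Z).trace = (H * Zᵀ * G * Z).trace := by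
    have e1 : H * Zᵀ * G * Z = P * (B * (Zᵀ * (A * Z))) := by
      rw [hH, hG]
      have hnn : -(P * B * P) * Zᵀ * -(P * A * P) * Z = P * B * P * Zᵀ * (P * A * P) * Z := by
        simp only [Matrix.neg_mul, Matrix.mul_neg, neg_neg]
      rw [hnn]
      simp only [Matrix.mul_assoc]
      rw [hPZ]
      rw [show Zᵀ * (P * (A * Z)) = Zᵀ * P * (A * Z) from (Matrix.mul_assoc _ _ _).symm, hZtP]
      rw [show P * (Zᵀ * (A * Z)) = P * Zᵀ * (A * Z) from (Matrix.mul_assoc _ _ _).symm, hPZt]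
    rw [e1, Matrix.trace_mul_comm P (B * (Zᵀ * (A * Z)))]
    simp only [Matrix.mul_assoc]
    rw [hZP]
  -- trace as sum of squares
  set M := C * Z * D with hM
  have htr2 : (H * Zᵀ * G * Z).trace = (Mᵀ * M).trace := by
    have e2 : H * Zᵀ * G * Z = D * (D * (Zᵀ * (C * (C * Z)))) := by
      rw [← hCC, ← hDD]
      simp only [Matrix.mul_assoc]
    have e3 : Mᵀ * M = D * (Zᵀ * (C * (C * (Z * D)))) := by
      rw [hM, Matrix.transpose_mul, Matrix.transpose_mul, hCt, hDt]
      simp only [Matrix.mul_assoc]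
    rw [e2, Matrix.trace_mul_comm, e3]
    simp only [Matrix.mul_assoc]
  have hsq : (B * Zᵀ * A * Z).trace = ∑ j, ∑ k, (M k j)^2 := by
    rw [htr1, htr2, trace_transpose_mul_self]
  have hnonneg : 0 ≤ (B * Zᵀ * A * Z).trace := by
    rw [hsq]
    exact Finset.sum_nonneg fun j _ => Finset.sum_nonneg fun k _ => sq_nonneg _
  refine ⟨hnonneg, fun hZne => ?_⟩
  rcases lt_or_eq_of_le hnonneg with h | h
  · exact h
  -- trace = 0 : derive Z = 0, contradiction
  exfalso
  have hM0 : M = 0 := by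
    have hsum0 : ∑ j, ∑ k, (M k j)^2 = 0 := by rw [← hsq, ← h]
    ext k j
    have h1 : ∀ j ∈ Finset.univ, (0:ℝ) ≤ ∑ k, (M k j)^2 :=
      fun j _ => Finset.sum_nonneg fun k _ => sq_nonneg _
    have h3 : ∑ k, (M k j)^2 = 0 :=
      (Finset.sum_eq_zero_iff_of_nonneg h1).mp hsum0 j (Finset.mem_univ j)
    have h4 : ∀ k ∈ Finset.univ, (0:ℝ) ≤ (M k j)^2 := fun k _ => sq_nonneg _
    have h5 := (Finset.sum_eq_zero_iff_of_nonneg h4).mp h3 k (Finset.mem_univ k)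
    simpa using sq_eq_zero_iff.mp h5
  -- columns of Z * D vanish
  have hZD : Z * D = 0 := by
    ext k l
    have hcolsum : ∑ k, (Z * D) k l = 0 := by
      simp only [Matrix.mul_apply]
      rw [Finset.sum_comm]
      simp_rw [← Finset.sum_mul]
      simp [hZc]
    set v : Fin n → ℝ := fun k => (Z * D) k l with hv
    have hCv : C *ᵥ v = 0 := by
      funext i
      have : (C *ᵥ v) i = (C * (Z * D)) i l := by
        rw [Matrix.mulVec, dotProduct, Matrix.mul_apply]
      rw [this, ← Matrix.mul_assoc, ← hM, hM0]
      simp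
    have hq : v ⬝ᵥ (G *ᵥ v) = 0 := by
      rw [← hCC, ← Matrix.mulVec_mulVec, Matrix.dotProduct_mulVec v C,
        ← Matrix.mulVec_transpose, hCt, hCv]
      simp
    have hAv : v ⬝ᵥ (A *ᵥ v) = 0 := by
      have := hquadG v
      rw [hq, hPfix v hcolsum] at this
      linarith
    have hv0 : v = 0 := by
      by_contra hvne
      exact absurd hAv (ne_of_lt (hAq v hcolsum hvne))
    have := congrFun hv0 k
    simpa [hv] using this
  have hZH : Z * H = 0 := by
    rw [← hDD, ← Matrix.mul_assoc, hZD, Matrix.zero_mul]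
  have hZ0 : Z = 0 := by
    ext i l
    set w : Fin n → ℝ := fun l => Z i l with hw
    have hrowsum : ∑ l, w l = 0 := hZr i
    have hHw : H *ᵥ w = 0 := by
      funext j
      have h1 : (H *ᵥ w) j = ∑ l, H j l * Z i l := by
        rw [Matrix.mulVec, dotProduct]
      have h2 : ∀ l, H j l = H l j := by
        intro l
        conv_lhs => rw [← hHt]
        exact Matrix.transpose_apply H j l
      have h3 : (H *ᵥ w) j = (Z * H) i j := by
        rw [h1, Matrix.mul_apply]
        exact Finset.sum_congr rfl fun l _ => by rw [h2 l]; ring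
      rw [h3, hZH]
      simp
    have hq : w ⬝ᵥ (H *ᵥ w) = 0 := by rw [hHw]; simp
    have hBw : w ⬝ᵥ (B *ᵥ w) = 0 := by
      have := hquadH w
      rw [hq, hPfix w hrowsum] at this
      linarith
    have hw0 : w = 0 := by
      by_contra hwne
      exact absurd hBw (ne_of_lt (hBq w hrowsum hwne))
    have := congrFun hw0 l
    simpa [hw] using this
  exact hZne hZ0

end quad

lemma expand_trace {n : ℕ} (A B X Z : Matrix (Fin n) (Fin n) ℝ) (t : ℝ) :
    (B * (X + t • Z)ᵀ * A * (X + t • Z)).trace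
      = (B * Xᵀ * A * X).trace
        + t * ((B * Zᵀ * A * X).trace + (B * Xᵀ * A * Z).trace)
        + t^2 * (B * Zᵀ * A * Z).trace := by
  simp only [Matrix.transpose_add, Matrix.transpose_smul, Matrix.mul_add, Matrix.add_mul,
    Matrix.mul_smul, Matrix.smul_mul, Matrix.trace_add, Matrix.trace_smul, smul_eq_mul,
    smul_smul]
  ring


end AuxGM

/-- For Euclidean distance matrices `A i j = ‖x i - x j‖₂`, `B i j = ‖y i - y j‖₂` built from
pairwise distinct points, the set of global minimizers of `E₂(X) = -tr (B Xᵀ A X)` over the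
doubly stochastic matrices equals the set of global minimizers of `E₂` over the permutation
matrices; in particular the minimal values agree and every global minimizer over `DS` is a
permutation matrix. -/
theorem euclidean_gm_solution_sets_coincide
    {d s n : ℕ}
    (x : Fin n → EuclideanSpace ℝ (Fin d)) (hx : Function.Injective x)
    (y : Fin n → EuclideanSpace ℝ (Fin s)) (hy : Function.Injective y)
    (A B : Matrix (Fin n) (Fin n) ℝ)
    (hA : ∀ i j, A i j = ‖x i - x j‖) (hB : ∀ i j, B i j = ‖y i - y j‖)
    (E : Matrix (Fin n) (Fin n) ℝ → ℝ)
    (hE : ∀ X, E X = -(B * Xᵀ * A * X).trace)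
    (DS : Set (Matrix (Fin n) (Fin n) ℝ))
    (hDS : DS = {X | X *ᵥ (fun _ => 1) = (fun _ => 1) ∧ Xᵀ *ᵥ (fun _ => 1) = (fun _ => 1) ∧
      ∀ i j, 0 ≤ X i j})
    (Perm : Set (Matrix (Fin n) (Fin n) ℝ))
    (hPerm : Perm = {X | ∃ σ : Equiv.Perm (Fin n), X = σ.permMatrix ℝ}) :
    {X ∈ DS | ∀ Y ∈ DS, E X ≤ E Y} = {X ∈ Perm | ∀ Y ∈ Perm, E X ≤ E Y} ∧
      sInf (E '' DS) = sInf (E '' Perm) ∧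
      (∀ X ∈ DS, (∀ Y ∈ DS, E X ≤ E Y) → X ∈ Perm) := by
  classical
  -- symmetric matrices
  have hAs : Aᵀ = A := by
    ext i j
    rw [Matrix.transpose_apply, hA, hA, norm_sub_rev]
  have hBs : Bᵀ = B := by
    ext i j
    rw [Matrix.transpose_apply, hB, hB, norm_sub_rev]
  -- strict quadratic forms
  have hAq : ∀ c : Fin n → ℝ, (∑ i, c i = 0) → c ≠ 0 → c ⬝ᵥ (A *ᵥ c) < 0 := by
    intro c hc hc0
    have h1 : c ⬝ᵥ (A *ᵥ c) = ∑ i, ∑ j, c i * c j * ‖x i - x j‖ := by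
      simp only [dotProduct, Matrix.mulVec, Finset.mul_sum]
      exact Finset.sum_congr rfl fun i _ => Finset.sum_congr rfl fun j _ => by
        rw [hA i j]; ring
    rw [h1]
    exact strict_cnd x hx c hc hc0
  have hBq : ∀ c : Fin n → ℝ, (∑ i, c i = 0) → c ≠ 0 → c ⬝ᵥ (B *ᵥ c) < 0 := by
    intro c hc hc0
    have h1 : c ⬝ᵥ (B *ᵥ c) = ∑ i, ∑ j, c i * c j * ‖y i - y j‖ := by
      simp only [dotProduct, Matrix.mulVec, Finset.mul_sum]
      exact Finset.sum_congr rfl fun i _ => Finset.sum_congr rfl fun j _ => by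
        rw [hB i j]; ring
    rw [h1]
    exact strict_cnd y hy c hc hc0
  -- membership characterizations
  have hDSsums : ∀ X ∈ DS, (∀ i, ∑ j, X i j = 1) ∧ (∀ j, ∑ i, X i j = 1)
      ∧ (∀ i j, 0 ≤ X i j) := by
    intro X hX
    rw [hDS] at hX
    obtain ⟨h1, h2, h3⟩ := hX
    refine ⟨fun i => ?_, fun j => ?_, h3⟩
    · have := congrFun h1 i
      simpa [Matrix.mulVec, dotProduct] using this
    · have := congrFun h2 j
      simpa [Matrix.mulVec, dotProduct, Matrix.transpose_apply] using this
  have hDSofsums : ∀ X : Matrix (Fin n) (Fin n) ℝ, (∀ i, ∑ j, X i j = 1) →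
      (∀ j, ∑ i, X i j = 1) → (∀ i j, 0 ≤ X i j) → X ∈ DS := by
    intro X h1 h2 h3
    rw [hDS]
    refine ⟨?_, ?_, h3⟩
    · funext i
      simpa [Matrix.mulVec, dotProduct] using h1 i
    · funext j
      simpa [Matrix.mulVec, dotProduct, Matrix.transpose_apply] using h2 j
  have hPermDS : Perm ⊆ DS := by
    intro X hX
    rw [hPerm] at hX
    obtain ⟨σ, rfl⟩ := hX
    have hds := permMatrix_mem_doublyStochastic (R := ℝ) (σ := σ)
    rw [mem_doublyStochastic_iff_sum] at hds
    exact hDSofsums _ hds.2.1 hds.2.2 hds.1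
  -- combination helper
  have hcombDS : ∀ (T : Finset (Equiv.Perm (Fin n))) (u : Equiv.Perm (Fin n) → ℝ),
      (∀ σ, 0 ≤ u σ) → (∑ σ ∈ T, u σ = 1) → (∑ σ ∈ T, u σ • σ.permMatrix ℝ) ∈ DS := by
    intro T u hu0 hu1
    have hrowP : ∀ (σ : Equiv.Perm (Fin n)) (i : Fin n), ∑ j, (σ.permMatrix ℝ) i j = 1 := by
      intro σ i
      exact sum_row_of_mem_doublyStochastic permMatrix_mem_doublyStochastic i
    have hcolP : ∀ (σ : Equiv.Perm (Fin n)) (j : Fin n), ∑ i, (σ.permMatrix ℝ) i j = 1 := by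
      intro σ j
      exact sum_col_of_mem_doublyStochastic permMatrix_mem_doublyStochastic j
    have hnnP : ∀ (σ : Equiv.Perm (Fin n)) (i j : Fin n), 0 ≤ (σ.permMatrix ℝ) i j := by
      intro σ i j
      exact nonneg_of_mem_doublyStochastic permMatrix_mem_doublyStochastic
    apply hDSofsums
    · intro i
      simp only [Matrix.sum_apply, Matrix.smul_apply, smul_eq_mul]
      rw [Finset.sum_comm]
      calc ∑ σ ∈ T, ∑ j, u σ * (σ.permMatrix ℝ) i j
          = ∑ σ ∈ T, u σ * ∑ j, (σ.permMatrix ℝ) i j := by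
            exact Finset.sum_congr rfl fun σ _ => (Finset.mul_sum _ _ _).symm
        _ = ∑ σ ∈ T, u σ := by
            exact Finset.sum_congr rfl fun σ _ => by rw [hrowP σ i, mul_one]
        _ = 1 := hu1
    · intro j
      simp only [Matrix.sum_apply, Matrix.smul_apply, smul_eq_mul]
      rw [Finset.sum_comm]
      calc ∑ σ ∈ T, ∑ i, u σ * (σ.permMatrix ℝ) i j
          = ∑ σ ∈ T, u σ * ∑ i, (σ.permMatrix ℝ) i j := by
            exact Finset.sum_congr rfl fun σ _ => (Finset.mul_sum _ _ _).symm
        _ = ∑ σ ∈ T, u σ := by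
            exact Finset.sum_congr rfl fun σ _ => by rw [hcolP σ j, mul_one]
        _ = 1 := hu1
    · intro i j
      simp only [Matrix.sum_apply, Matrix.smul_apply, smul_eq_mul]
      exact Finset.sum_nonneg fun σ _ => mul_nonneg (hu0 σ) (hnnP σ i j)
  
  -- expansion of E along a direction
  have hEpt : ∀ (Y Z : Matrix (Fin n) (Fin n) ℝ) (t : ℝ),
      E (Y + t • Z) = E Y - t * ((B * Zᵀ * A * Y).trace + (B * Yᵀ * A * Z).trace)
        - t^2 * (B * Zᵀ * A * Z).trace := by
    intro Y Z t
    rw [hE, hE, expand_trace]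
    ring
  -- marginals of differences
  have hqZ : ∀ (X Y : Matrix (Fin n) (Fin n) ℝ), X ∈ DS → Y ∈ DS →
      (∀ i, ∑ j, (X - Y) i j = 0) ∧ (∀ j, ∑ i, (X - Y) i j = 0) := by
    intro X Y hXd hYd
    obtain ⟨hr1, hc1, _⟩ := hDSsums X hXd
    obtain ⟨hr2, hc2, _⟩ := hDSsums Y hYd
    constructor
    · intro i
      simp only [Matrix.sub_apply]
      rw [Finset.sum_sub_distrib, hr1 i, hr2 i, sub_self]
    · intro j
      simp only [Matrix.sub_apply]
      rw [Finset.sum_sub_distrib, hc1 j, hc2 j, sub_self]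
  have hPermMemDS : ∀ σ : Equiv.Perm (Fin n), σ.permMatrix ℝ ∈ DS := by
    intro σ
    exact hPermDS (by rw [hPerm]; exact ⟨σ, rfl⟩)
  -- descent: every DS point is dominated by some permutation matrix
  have descent : ∀ (S : Finset (Equiv.Perm (Fin n))), ∀ (w : Equiv.Perm (Fin n) → ℝ)
      (Y : Matrix (Fin n) (Fin n) ℝ),
      (∀ σ, 0 ≤ w σ) → (∑ σ ∈ S, w σ = 1) → (∑ σ ∈ S, w σ • σ.permMatrix ℝ = Y) →
      ∃ σ : Equiv.Perm (Fin n), E (σ.permMatrix ℝ) ≤ E Y := by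
    intro S
    induction S using Finset.strongInduction with
    | _ S ih =>
      intro w Y hw0 hw1 hwY
      have hex : ∃ σ ∈ S, 0 < w σ := by
        by_contra h
        push_neg at h
        have h0 : ∑ σ ∈ S, w σ = 0 :=
          Finset.sum_eq_zero fun σ hσ => le_antisymm (h σ hσ) (hw0 σ)
        rw [h0] at hw1
        norm_num at hw1
      obtain ⟨σ₁, hσ₁S, hσ₁pos⟩ := hex
      have hsplit : w σ₁ + ∑ σ ∈ S.erase σ₁, w σ = 1 := by
        rw [Finset.add_sum_erase S w hσ₁S]
        exact hw1
      have hw1le : w σ₁ ≤ 1 := by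
        have h0 : 0 ≤ ∑ σ ∈ S.erase σ₁, w σ := Finset.sum_nonneg fun σ _ => hw0 σ
        linarith
      rcases eq_or_lt_of_le hw1le with heq | hlt
      · -- w σ₁ = 1 : Y is a permutation matrix
        have hzero : ∀ σ ∈ S.erase σ₁, w σ = 0 := by
          intro σ hσ
          have h0 : ∑ σ ∈ S.erase σ₁, w σ = 0 := by linarith
          exact (Finset.sum_eq_zero_iff_of_nonneg fun σ _ => hw0 σ).mp h0 σ hσ
        have hY : Y = σ₁.permMatrix ℝ := by
          rw [← hwY, ← Finset.add_sum_erase S _ hσ₁S,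
            Finset.sum_eq_zero (fun σ hσ => by rw [hzero σ hσ, zero_smul]),
            add_zero, heq, one_smul]
        exact ⟨σ₁, le_of_eq (congrArg E hY.symm)⟩
      · -- 0 < w σ₁ < 1
        have hμpos : 0 < 1 - w σ₁ := by linarith
        have hsum_erase : ∑ σ ∈ S.erase σ₁, w σ = 1 - w σ₁ := by linarith
        set W : Matrix (Fin n) (Fin n) ℝ :=
          (1 - w σ₁)⁻¹ • ∑ σ ∈ S.erase σ₁, w σ • σ.permMatrix ℝ with hWdef
        have hWsum : ∑ σ ∈ S.erase σ₁, ((1 - w σ₁)⁻¹ * w σ) • σ.permMatrix ℝ = W := by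
          rw [hWdef, Finset.smul_sum]
          exact Finset.sum_congr rfl fun σ _ => by rw [smul_smul]
        have hu0 : ∀ σ, 0 ≤ (1 - w σ₁)⁻¹ * w σ :=
          fun σ => mul_nonneg (inv_nonneg.mpr hμpos.le) (hw0 σ)
        have hu1 : ∑ σ ∈ S.erase σ₁, (1 - w σ₁)⁻¹ * w σ = 1 := by
          rw [← Finset.mul_sum, hsum_erase, inv_mul_cancel₀ hμpos.ne']
        have hWds : W ∈ DS := by
          rw [← hWsum]
          exact hcombDS _ _ hu0 hu1
        have hμW : (1 - w σ₁) • W = ∑ σ ∈ S.erase σ₁, w σ • σ.permMatrix ℝ := by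
          rw [hWdef, smul_inv_smul₀ hμpos.ne']
        have hY : Y = w σ₁ • σ₁.permMatrix ℝ + (1 - w σ₁) • W := by
          rw [hμW, ← hwY, ← Finset.add_sum_erase S _ hσ₁S]
        obtain ⟨σ₂, hσ₂⟩ := ih (S.erase σ₁) (Finset.erase_ssubset hσ₁S)
          (fun σ => (1 - w σ₁)⁻¹ * w σ) W hu0 hu1 hWsum
        have hPmDS := hPermMemDS σ₁
        set Z : Matrix (Fin n) (Fin n) ℝ := σ₁.permMatrix ℝ - W with hZdef
        obtain ⟨hZr, hZc⟩ := hqZ _ _ hPmDS hWds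
        have hq0 := (quad_lemma A B hAs hBs hAq hBq Z hZr hZc).1
        have hPm_eq : σ₁.permMatrix ℝ = Y + (1 - w σ₁) • Z := by
          rw [hY, hZdef]
          module
        have hW_eq : W = Y + (-(w σ₁)) • Z := by
          rw [hY, hZdef]
          module
        have hEPm : E (σ₁.permMatrix ℝ)
            = E Y - (1 - w σ₁) * ((B * Zᵀ * A * Y).trace + (B * Yᵀ * A * Z).trace)
              - (1 - w σ₁)^2 * (B * Zᵀ * A * Z).trace := by
          rw [hPm_eq, hEpt]
        have hEW : E W
            = E Y + (w σ₁) * ((B * Zᵀ * A * Y).trace + (B * Yᵀ * A * Z).trace)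
              - (w σ₁)^2 * (B * Zᵀ * A * Z).trace := by
          rw [hW_eq, hEpt]
          ring
        by_cases hc : E (σ₁.permMatrix ℝ) ≤ E Y
        · exact ⟨σ₁, hc⟩
        · push_neg at hc
          refine ⟨σ₂, le_trans hσ₂ ?_⟩
          set L := (B * Zᵀ * A * Y).trace + (B * Yᵀ * A * Z).trace with hLdef
          set q := (B * Zᵀ * A * Z).trace with hqdef
          have h1 : (1 - w σ₁) * L + (1 - w σ₁)^2 * q < 0 := by
            rw [hEPm] at hc
            linarith
          have hL : L < 0 := by
            by_contra h
            push_neg at h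
            nlinarith [mul_nonneg hμpos.le h, mul_nonneg (mul_nonneg hμpos.le hμpos.le) hq0]
          have h2 : w σ₁ * L ≤ 0 := mul_nonpos_of_nonneg_of_nonpos hσ₁pos.le hL.le
          have h3 : 0 ≤ (w σ₁)^2 * q := mul_nonneg (sq_nonneg _) hq0
          rw [hEW]
          linarith
  -- every minimizer over DS is a permutation matrix
  have key2 : ∀ X ∈ DS, (∀ Y ∈ DS, E X ≤ E Y) → X ∈ Perm := by
    intro X hXds hXmin
    have hXds' : X ∈ doublyStochastic ℝ (Fin n) := by
      rw [mem_doublyStochastic_iff_sum]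
      obtain ⟨h1, h2, h3⟩ := hDSsums X hXds
      exact ⟨h3, h1, h2⟩
    obtain ⟨w, hw0, hw1, hwX⟩ := exists_eq_sum_perm_of_mem_doublyStochastic hXds'
    by_contra hnot
    rw [hPerm] at hnot
    simp only [Set.mem_setOf_eq] at hnot
    push_neg at hnot
    have hex : ∃ σ, 0 < w σ := by
      by_contra h
      push_neg at h
      have h0 : ∑ σ, w σ = 0 := Finset.sum_eq_zero fun σ _ => le_antisymm (h σ) (hw0 σ)
      rw [h0] at hw1
      norm_num at hw1
    obtain ⟨σ₁, hσ₁pos⟩ := hex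
    have hσ₁S : σ₁ ∈ (Finset.univ : Finset (Equiv.Perm (Fin n))) := Finset.mem_univ σ₁
    have hsplit : w σ₁ + ∑ σ ∈ Finset.univ.erase σ₁, w σ = 1 := by
      rw [Finset.add_sum_erase _ w hσ₁S]
      exact hw1
    have hw1le : w σ₁ ≤ 1 := by
      have h0 : 0 ≤ ∑ σ ∈ Finset.univ.erase σ₁, w σ := Finset.sum_nonneg fun σ _ => hw0 σ
      linarith
    rcases eq_or_lt_of_le hw1le with heq | hlt
    · -- X would be a permutation matrix
      apply hnot σ₁
      have hzero : ∀ σ ∈ Finset.univ.erase σ₁, w σ = 0 := by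
        intro σ hσ
        have h0 : ∑ σ ∈ Finset.univ.erase σ₁, w σ = 0 := by linarith
        exact (Finset.sum_eq_zero_iff_of_nonneg fun σ _ => hw0 σ).mp h0 σ hσ
      rw [← hwX, ← Finset.add_sum_erase _ _ hσ₁S,
        Finset.sum_eq_zero (fun σ hσ => by rw [hzero σ hσ, zero_smul]),
        add_zero, heq, one_smul]
    · have hμpos : 0 < 1 - w σ₁ := by linarith
      have hsum_erase : ∑ σ ∈ Finset.univ.erase σ₁, w σ = 1 - w σ₁ := by linarith
      set W : Matrix (Fin n) (Fin n) ℝ :=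
        (1 - w σ₁)⁻¹ • ∑ σ ∈ Finset.univ.erase σ₁, w σ • σ.permMatrix ℝ with hWdef
      have hWsum : ∑ σ ∈ Finset.univ.erase σ₁, ((1 - w σ₁)⁻¹ * w σ) • σ.permMatrix ℝ = W := by
        rw [hWdef, Finset.smul_sum]
        exact Finset.sum_congr rfl fun σ _ => by rw [smul_smul]
      have hu0 : ∀ σ, 0 ≤ (1 - w σ₁)⁻¹ * w σ :=
        fun σ => mul_nonneg (inv_nonneg.mpr hμpos.le) (hw0 σ)
      have hu1 : ∑ σ ∈ Finset.univ.erase σ₁, (1 - w σ₁)⁻¹ * w σ = 1 := by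
        rw [← Finset.mul_sum, hsum_erase, inv_mul_cancel₀ hμpos.ne']
      have hWds : W ∈ DS := by
        rw [← hWsum]
        exact hcombDS _ _ hu0 hu1
      have hμW : (1 - w σ₁) • W = ∑ σ ∈ Finset.univ.erase σ₁, w σ • σ.permMatrix ℝ := by
        rw [hWdef, smul_inv_smul₀ hμpos.ne']
      have hX : X = w σ₁ • σ₁.permMatrix ℝ + (1 - w σ₁) • W := by
        rw [hμW, ← hwX, ← Finset.add_sum_erase _ _ hσ₁S]
      have hPmDS := hPermMemDS σ₁
      set Z : Matrix (Fin n) (Fin n) ℝ := σ₁.permMatrix ℝ - W with hZdef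
      obtain ⟨hZr, hZc⟩ := hqZ _ _ hPmDS hWds
      have hZne : Z ≠ 0 := by
        intro h0
        apply hnot σ₁
        have hPW : σ₁.permMatrix ℝ = W := by
          have := sub_eq_zero.mp (hZdef ▸ h0)
          exact this
        rw [hX, ← hPW]
        module
      have hqpos := (quad_lemma A B hAs hBs hAq hBq Z hZr hZc).2 hZne
      have hPm_eq : σ₁.permMatrix ℝ = X + (1 - w σ₁) • Z := by
        rw [hX, hZdef]
        module
      have hW_eq : W = X + (-(w σ₁)) • Z := by
        rw [hX, hZdef]
        module
      have hEPm : E (σ₁.permMatrix ℝ)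
          = E X - (1 - w σ₁) * ((B * Zᵀ * A * X).trace + (B * Xᵀ * A * Z).trace)
            - (1 - w σ₁)^2 * (B * Zᵀ * A * Z).trace := by
        rw [hPm_eq, hEpt]
      have hEW : E W
          = E X + (w σ₁) * ((B * Zᵀ * A * X).trace + (B * Xᵀ * A * Z).trace)
            - (w σ₁)^2 * (B * Zᵀ * A * Z).trace := by
        rw [hW_eq, hEpt]
        ring
      have hmin1 := hXmin _ hPmDS
      have hmin2 := hXmin _ hWds
      rw [hEPm] at hmin1
      rw [hEW] at hmin2
      set L := (B * Zᵀ * A * X).trace + (B * Xᵀ * A * Z).trace with hLdef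
      set q := (B * Zᵀ * A * Z).trace with hqdef
      -- hmin1 : E X ≤ E X - (1-w1) L - (1-w1)^2 q
      -- hmin2 : E X ≤ E X + w1 L - w1^2 q
      nlinarith [hqpos, hσ₁pos, hμpos, hmin1, hmin2,
        mul_pos hσ₁pos hμpos, mul_pos (mul_pos hσ₁pos hμpos) hqpos]
  -- permutations are nonempty and Perm has a minimizer
  have hPermNe : ∃ σs : Equiv.Perm (Fin n), ∀ σ : Equiv.Perm (Fin n),
      E (σs.permMatrix ℝ) ≤ E (σ.permMatrix ℝ) := by
    obtain ⟨σs, _, hmin⟩ := Finset.exists_min_image Finset.univ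
      (fun σ : Equiv.Perm (Fin n) => E (σ.permMatrix ℝ)) ⟨1, Finset.mem_univ 1⟩
    exact ⟨σs, fun σ => hmin σ (Finset.mem_univ σ)⟩
  obtain ⟨σs, hσs⟩ := hPermNe
  have hdom : ∀ Y ∈ DS, E (σs.permMatrix ℝ) ≤ E Y := by
    intro Y hY
    have hY' : Y ∈ doublyStochastic ℝ (Fin n) := by
      rw [mem_doublyStochastic_iff_sum]
      obtain ⟨h1, h2, h3⟩ := hDSsums Y hY
      exact ⟨h3, h1, h2⟩
    obtain ⟨w, hw0, hw1, hwY⟩ := exists_eq_sum_perm_of_mem_doublyStochastic hY'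
    obtain ⟨σ, hσ⟩ := descent Finset.univ w Y hw0 hw1 hwY
    exact le_trans (hσs σ) hσ
  have hPermMem' : ∀ σ : Equiv.Perm (Fin n), σ.permMatrix ℝ ∈ Perm := by
    intro σ
    rw [hPerm]
    exact ⟨σ, rfl⟩
  refine ⟨?_, ?_, key2⟩
  · -- minimizer sets coincide
    ext X
    simp only [Set.mem_setOf_eq, Set.mem_sep_iff]
    constructor
    · rintro ⟨hXds, hXmin⟩
      refine ⟨key2 X hXds hXmin, fun Y hY => hXmin Y (hPermDS hY)⟩
    · rintro ⟨hXp, hXmin⟩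
      refine ⟨hPermDS hXp, fun Y hY => ?_⟩
      have hY' : Y ∈ doublyStochastic ℝ (Fin n) := by
        rw [mem_doublyStochastic_iff_sum]
        obtain ⟨h1, h2, h3⟩ := hDSsums Y hY
        exact ⟨h3, h1, h2⟩
      obtain ⟨w, hw0, hw1, hwY⟩ := exists_eq_sum_perm_of_mem_doublyStochastic hY'
      obtain ⟨σ, hσ⟩ := descent Finset.univ w Y hw0 hw1 hwY
      exact le_trans (hXmin _ (hPermMem' σ)) hσ
  · -- equality of infima
    have hbdd : ∀ z ∈ E '' DS, E (σs.permMatrix ℝ) ≤ z := by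
      rintro z ⟨Y, hY, rfl⟩
      exact hdom Y hY
    have hbddP : ∀ z ∈ E '' Perm, E (σs.permMatrix ℝ) ≤ z := by
      rintro z ⟨Y, hY, rfl⟩
      rw [hPerm] at hY
      obtain ⟨σ, rfl⟩ := hY
      exact hσs σ
    have h1 : sInf (E '' DS) = E (σs.permMatrix ℝ) := by
      apply le_antisymm
      · exact csInf_le ⟨_, hbdd⟩ ⟨_, hPermDS (hPermMem' σs), rfl⟩
      · exact le_csInf ⟨_, ⟨_, hPermDS (hPermMem' σs), rfl⟩⟩ hbdd
    have h2 : sInf (E '' Perm) = E (σs.permMatrix ℝ) := by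
      apply le_antisymm
      · exact csInf_le ⟨_, hbddP⟩ ⟨_, hPermMem' σs, rfl⟩
      · exact le_csInf ⟨_, ⟨_, hPermMem' σs, rfl⟩⟩ hbddP
    rw [h1, h2]
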